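/- For integers m, n, r, i with 0 ≤ r ≤ i ≤ n ≤ m, the q-binomial identity qbinom(m+n−r−i−1, n−r−1) = q^{(n−r−1)(r−i)} · ∑_{j=r}^{i} qbinom(m+n−r−j−1, n−j−1) · qbinom(i−r, j−r) · (−1)^{j−r} · q^{C(j−r,2)} holds, where C(a,2) = a(a−1)/2. -/

import Mathlib

open Finset

noncomputable section
open scoped Classical

variable {K : Type*} [Field K]

/-- The `q`-integer `[x] = (1 - q^x)/(1 - q)` for an integer `x`. -/
def qInt (q : K) (x : ℤ) : K := (1 - q ^ x) / (1 - q)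

/-- The falling `q`-factorial `[x]_j = [x][x-1]⋯[x-j+1]`. -/
def qFall (q : K) (x : ℤ) (j : ℕ) : K := ∏ t ∈ Finset.range j, qInt q (x - t)

/-- The `q`-factorial `[n]! = [n]_n`. -/
def qFact (q : K) (n : ℕ) : K := qFall q (n : ℤ) n

/-- The Gaussian (`q`-)binomial coefficient `[a]!/([b]! [a-b]!)`. -/
def qBinom (q : K) (a b : ℕ) : K := qFact q a / (qFact q b * qFact q (a - b))

/-- The cells of the Ferrers board of `lam` (1-indexed rows `1,…,ℓ`):
cell `(i,j)` with `1 ≤ i ≤ ℓ` and `1 ≤ j ≤ lam i`. -/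
def board (lam : ℕ → ℕ) (ℓ : ℕ) : Finset (ℕ × ℕ) :=
  ((Finset.Icc 1 ℓ) ×ˢ (Finset.Icc 1 ((Finset.Icc 1 ℓ).sup lam))).filter
    (fun c => c.2 ≤ lam c.1)

/-- Placements of `k` non-attacking rooks on the Ferrers board of `lam`. -/
def placements (lam : ℕ → ℕ) (ℓ k : ℕ) : Finset (Finset (ℕ × ℕ)) :=
  (board lam ℓ).powerset.filter
    (fun p => p.card = k ∧ ∀ a ∈ p, ∀ b ∈ p, a ≠ b → a.1 ≠ b.1 ∧ a.2 ≠ b.2)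

/-- The Garsia–Remmel inversion statistic of a rook placement `p`: the number of
cells of the board that are not occupied by a rook and not directly west
(same row, with a rook strictly to the east) or north (same column, with a rook
strictly to the south) of a rook. -/
def rInv (lam : ℕ → ℕ) (ℓ : ℕ) (p : Finset (ℕ × ℕ)) : ℕ :=
  ((board lam ℓ).filter (fun c => c ∉ p ∧
      (∀ r ∈ p, r.1 = c.1 → r.2 < c.2) ∧
      (∀ r ∈ p, r.2 = c.2 → r.1 < c.1))).card

/-- The Garsia–Remmel `q`-rook number `R_k(λ) = ∑_p q^{inv(p)}`. -/
def qRook (q : K) (lam : ℕ → ℕ) (ℓ k : ℕ) : K :=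
  ∑ p ∈ placements lam ℓ k, q ^ rInv lam ℓ p

/-- The size `|λ| = λ_1 + ⋯ + λ_ℓ`. -/
def pSize (lam : ℕ → ℕ) (ℓ : ℕ) : ℕ := ∑ i ∈ Finset.Icc 1 ℓ, lam i

/-- The `q`-hit numbers `H_k^{m,n}(λ)` of `λ ⊆ n×m`, defined from the `q`-rook
numbers by the change of basis
`H_k^{m,n}(λ) = (q^{C(k,2)-|λ|}/[m-n]!) ∑_{i=k}^{n} R_i(λ) [m-i]! qbinom(i,k) (-1)^{i+k} q^{mi-C(i,2)}`. -/
def qHit (q : K) (m n : ℕ) (lam : ℕ → ℕ) (ℓ k : ℕ) : K :=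
  (q ^ ((k.choose 2 : ℤ) - (pSize lam ℓ : ℤ)) / qFact q (m - n)) *
    ∑ i ∈ Finset.Icc k n, qRook q lam ℓ i * qFact q (m - i) * qBinom q i k *
      (-1 : K) ^ (i + k) * q ^ ((m : ℤ) * (i : ℤ) - (i.choose 2 : ℤ))

/-- `lam : ℕ → ℕ` is a partition with exactly `ℓ` (positive) parts `lam 1 ≥ ⋯ ≥ lam ℓ ≥ 1`. -/
def IsPartition (lam : ℕ → ℕ) (ℓ : ℕ) : Prop :=
  (∀ i j, 1 ≤ i → i ≤ j → lam j ≤ lam i) ∧ (∀ i, ℓ < i → lam i = 0) ∧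
    (∀ i, 1 ≤ i → i ≤ ℓ → 1 ≤ lam i)

/-- `lam` is a partition with `ℓ` parts contained in an `n × m` board. -/
def IsPartitionIn (lam : ℕ → ℕ) (ℓ n m : ℕ) : Prop :=
  IsPartition lam ℓ ∧ ℓ ≤ n ∧ lam 1 ≤ m

/-- The rectangular partition `a^b` (`b` parts equal to `a`). -/
def rect (a b : ℕ) : ℕ → ℕ := fun i => if 1 ≤ i ∧ i ≤ b then a else 0

/-- The partition obtained from `lam` by deleting its `j`-th column. -/
def delCol (lam : ℕ → ℕ) (j : ℕ) : ℕ → ℕ :=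
  fun r => if j ≤ lam r then lam r - 1 else lam r

/-- The partition obtained from `lam` by deleting its `i`-th row. -/
def delRow (lam : ℕ → ℕ) (i : ℕ) : ℕ → ℕ :=
  fun r => if r < i then lam r else lam (r + 1)

/-- The `j`-th column length `λ'_j` of `lam` (with `ℓ` rows). -/
def conjP (lam : ℕ → ℕ) (ℓ j : ℕ) : ℕ :=
  ((Finset.Icc 1 ℓ).filter (fun r => j ≤ lam r)).card

/-- The Gaussian binomial coefficient with integer arguments, zero for a
negative lower argument. -/
def qBinomZ (q : K) (a b : ℤ) : K :=
  if 0 ≤ b then qFall q a b.toNat / qFact q b.toNat else 0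

section Aux
variable (q : K)
variable (hq0 : q ≠ 0) (hq1 : ∀ j : ℕ, 0 < j → q ^ j ≠ 1)
set_option linter.unusedSectionVars false
include hq0 hq1

lemma one_sub_q_ne : (1 : K) - q ≠ 0 := by
  have h := hq1 1 one_pos
  rw [pow_one] at h
  exact fun hc => h (sub_eq_zero.mp hc).symm

lemma qInt_ne_zero (x : ℤ) (hx : 0 < x) : qInt q x ≠ 0 := by
  have h1 : q ^ x = q ^ x.toNat := by
    rw [← zpow_natCast q x.toNat, Int.toNat_of_nonneg hx.le]
  have h2 : q ^ x.toNat ≠ 1 := hq1 x.toNat (by omega)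
  have : (1 : K) - q ^ x ≠ 0 := by
    rw [h1, sub_ne_zero]; exact fun hc => h2 hc.symm
  exact div_ne_zero this (one_sub_q_ne q hq0 hq1)

lemma qFact_ne_zero (n : ℕ) : qFact q n ≠ 0 := by
  rw [qFact, qFall]
  rw [Finset.prod_ne_zero_iff]
  intro t ht
  rw [Finset.mem_range] at ht
  exact qInt_ne_zero q hq0 hq1 _ (by omega)

lemma qInt_split (X B : ℤ) : qInt q X = qInt q B + q ^ B * qInt q (X - B) := by
  have h : q ^ B * q ^ (X - B) = q ^ X := by
    rw [← zpow_add₀ hq0]; congr 1; ring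
  simp only [qInt, ← mul_div_assoc]
  rw [← add_div]
  congr 1
  rw [mul_sub, mul_one, h]; ring

lemma qFall_succ_top (x : ℤ) (b : ℕ) :
    qFall q (x + 1) (b + 1) = qInt q (x + 1) * qFall q x b := by
  rw [qFall, Finset.prod_range_succ', mul_comm]
  congr 1
  · norm_num
  · refine Finset.prod_congr rfl fun t _ => ?_
    congr 1; push_cast; ring

lemma qFall_succ (x : ℤ) (b : ℕ) :
    qFall q x (b + 1) = qFall q x b * qInt q (x - b) := by
  rw [qFall, qFall, Finset.prod_range_succ]

lemma qFact_succ (n : ℕ) : qFact q (n + 1) = qInt q ((n : ℤ) + 1) * qFact q n := by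
  rw [qFact, qFact, show ((n + 1 : ℕ) : ℤ) = (n : ℤ) + 1 by push_cast; ring,
    qFall_succ_top q hq0 hq1]

lemma qFact_split (a b : ℕ) (h : b ≤ a) :
    qFact q a = qFall q (a : ℤ) b * qFact q (a - b) := by
  obtain ⟨c, rfl⟩ : ∃ c, a = b + c := ⟨a - b, by omega⟩
  simp only [qFact, qFall, Nat.add_sub_cancel_left]
  rw [Finset.prod_range_add]
  congr 1
  refine Finset.prod_congr rfl fun t _ => ?_
  congr 1; push_cast; ring

lemma qBinom_eq (a b : ℕ) (h : b ≤ a) :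
    qBinom q a b = qFall q (a : ℤ) b / qFact q b := by
  rw [qBinom, qFact_split q hq0 hq1 a b h, mul_comm (qFall q (a : ℤ) b),
    mul_comm (qFact q b), mul_div_mul_left _ _ (qFact_ne_zero q hq0 hq1 (a - b))]

lemma qFact_zero : qFact q 0 = 1 := by simp [qFact, qFall]

lemma qBinom_zero_right (n : ℕ) : qBinom q n 0 = 1 := by
  rw [qBinom, qFact_zero q hq0 hq1, one_mul, Nat.sub_zero, div_self (qFact_ne_zero q hq0 hq1 n)]

lemma qBinom_self (n : ℕ) : qBinom q n n = 1 := by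
  rw [qBinom, Nat.sub_self, qFact_zero q hq0 hq1, mul_one, div_self (qFact_ne_zero q hq0 hq1 n)]

lemma qBinomZ_natCast (a : ℤ) (k : ℕ) :
    qBinomZ q a (k : ℤ) = qFall q a k / qFact q k := by
  simp [qBinomZ]

lemma qBinomZ_neg (a b : ℤ) (h : b < 0) : qBinomZ q a b = 0 := by
  simp [qBinomZ, not_le.mpr h]

lemma qBinomZ_zero (a : ℤ) : qBinomZ q a 0 = 1 := by
  simp [qBinomZ, qFall, qFact, qFall]


lemma pascalZ (x b : ℤ) :
    qBinomZ q (x + 1) b = qBinomZ q x (b - 1) + q ^ b * qBinomZ q x b := by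
  rcases lt_trichotomy b 0 with hb | hb | hb
  · rw [qBinomZ_neg q hq0 hq1 _ _ hb, qBinomZ_neg q hq0 hq1 _ _ hb,
      qBinomZ_neg q hq0 hq1 _ _ (by omega)]
    ring
  · subst hb
    rw [qBinomZ_zero q hq0 hq1, qBinomZ_zero q hq0 hq1,
      qBinomZ_neg q hq0 hq1 _ _ (by omega)]
    simp
  · obtain ⟨k, rfl⟩ : ∃ k : ℕ, b = (k : ℤ) + 1 :=
      ⟨(b - 1).toNat, by omega⟩
    rw [show (k : ℤ) + 1 - 1 = (k : ℤ) from by ring,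
      show (k : ℤ) + 1 = ((k + 1 : ℕ) : ℤ) from by push_cast; ring,
      qBinomZ_natCast q hq0 hq1, qBinomZ_natCast q hq0 hq1, qBinomZ_natCast q hq0 hq1,
      zpow_natCast]
    rw [qFall_succ_top q hq0 hq1 x k, qFall_succ q hq0 hq1 x k, qFact_succ q hq0 hq1 k]
    have hsplit := qInt_split q hq0 hq1 (x + 1) ((k : ℤ) + 1)
    rw [show x + 1 - ((k : ℤ) + 1) = x - k from by ring] at hsplit
    rw [hsplit]
    have h1 : qInt q ((k : ℤ) + 1) ≠ 0 := qInt_ne_zero q hq0 hq1 _ (by omega)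
    have h2 : qFact q k ≠ 0 := qFact_ne_zero q hq0 hq1 k
    have h3 : q ^ ((k : ℤ) + 1) = q ^ (k + 1) := by
      rw [show ((k : ℤ) + 1) = ((k + 1 : ℕ) : ℤ) from by push_cast; ring, zpow_natCast]
    rw [h3]
    field_simp

lemma pascalN (s j : ℕ) (h1 : 1 ≤ j) (h2 : j ≤ s) :
    qBinom q (s + 1) j = qBinom q s j + q ^ (s + 1 - j) * qBinom q s (j - 1) := by
  obtain ⟨t, rfl⟩ : ∃ t, j = t + 1 := ⟨j - 1, by omega⟩
  rw [qBinom_eq q hq0 hq1 _ _ (by omega), qBinom_eq q hq0 hq1 _ _ (by omega),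
    qBinom_eq q hq0 hq1 _ _ (by omega), Nat.add_sub_cancel]
  rw [show ((s + 1 : ℕ) : ℤ) = (s : ℤ) + 1 from by push_cast; ring,
    qFall_succ_top q hq0 hq1 (s : ℤ) t, qFall_succ q hq0 hq1 (s : ℤ) t,
    qFact_succ q hq0 hq1 t]
  have hsplit := qInt_split q hq0 hq1 ((s : ℤ) + 1) ((s : ℤ) - t)
  rw [show (s : ℤ) + 1 - ((s : ℤ) - t) = (t : ℤ) + 1 from by ring] at hsplit
  rw [hsplit]
  have h1 : qInt q ((t : ℤ) + 1) ≠ 0 := qInt_ne_zero q hq0 hq1 _ (by omega)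
  have h2 : qFact q t ≠ 0 := qFact_ne_zero q hq0 hq1 t
  have h3 : q ^ ((s : ℤ) - t) = q ^ (s + 1 - (t + 1)) := by
    rw [show ((s : ℤ) - t) = ((s - t : ℕ) : ℤ) from by push_cast [Nat.cast_sub (by omega : t ≤ s)]; ring,
      zpow_natCast, show s + 1 - (t + 1) = s - t from by omega]
  rw [← h3]
  field_simp

lemma mainIdent : ∀ (s : ℕ) (x a : ℤ),
    (∑ j ∈ Finset.range (s + 1), qBinomZ q (x - j) (a - j) * qBinom q s j *
      (-1 : K) ^ j * q ^ (j.choose 2)) = q ^ (a * s) * qBinomZ q (x - s) a := by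
  intro s
  induction s with
  | zero =>
    intro x a
    simp [qBinom_self q hq0 hq1 0]
  | succ s IH =>
    intro x a
    have pascal : ∀ j ∈ Finset.range (s + 2),
        qBinomZ q (x - j) (a - j) * qBinom q (s + 1) j * (-1 : K) ^ j * q ^ (j.choose 2) =
        (qBinomZ q (x - j) (a - j) * (if j ≤ s then qBinom q s j else 0) *
          (-1 : K) ^ j * q ^ (j.choose 2)) +
        (qBinomZ q (x - j) (a - j) *
          (if 1 ≤ j then q ^ (s + 1 - j) * qBinom q s (j - 1) else 0) *
          (-1 : K) ^ j * q ^ (j.choose 2)) := by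
      intro j hj
      rw [Finset.mem_range] at hj
      have hsplit : qBinom q (s + 1) j = (if j ≤ s then qBinom q s j else 0) +
          (if 1 ≤ j then q ^ (s + 1 - j) * qBinom q s (j - 1) else 0) := by
        rcases Nat.eq_zero_or_pos j with rfl | hj1
        · simp [qBinom_zero_right q hq0 hq1]
        rcases Nat.lt_or_ge j (s + 1) with hjs | hjs
        · rw [if_pos (by omega : j ≤ s), if_pos (by omega : 1 ≤ j),
            pascalN q hq0 hq1 s j hj1 (by omega)]
        · have hje : j = s + 1 := by omega
          subst hje
          rw [if_neg (by omega : ¬ (s + 1 ≤ s)), if_pos (by omega : 1 ≤ s + 1),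
            Nat.add_sub_cancel, Nat.sub_self, qBinom_self q hq0 hq1,
            qBinom_self q hq0 hq1]
          simp
      rw [hsplit]; ring
    rw [Finset.sum_congr rfl pascal, Finset.sum_add_distrib]
    have hA : (∑ j ∈ Finset.range (s + 2),
        qBinomZ q (x - j) (a - j) * (if j ≤ s then qBinom q s j else 0) *
          (-1 : K) ^ j * q ^ (j.choose 2)) = q ^ (a * s) * qBinomZ q (x - s) a := by
      rw [Finset.sum_range_succ, if_neg (by omega)]
      rw [← IH x a]
      simp only [mul_zero, zero_mul, add_zero]
      refine Finset.sum_congr rfl fun j hj => ?_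
      rw [Finset.mem_range] at hj
      rw [if_pos (by omega)]
    have hB : (∑ j ∈ Finset.range (s + 2),
        qBinomZ q (x - j) (a - j) *
          (if 1 ≤ j then q ^ (s + 1 - j) * qBinom q s (j - 1) else 0) *
          (-1 : K) ^ j * q ^ (j.choose 2)) =
        -(q ^ s * (q ^ ((a - 1) * s) * qBinomZ q (x - 1 - s) (a - 1))) := by
      rw [Finset.sum_range_succ']
      rw [if_neg (by omega)]
      simp only [mul_zero, zero_mul, add_zero]
      rw [← IH (x - 1) (a - 1), Finset.mul_sum, ← Finset.sum_neg_distrib]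
      refine Finset.sum_congr rfl fun j hj => ?_
      rw [Finset.mem_range] at hj
      rw [if_pos (by omega), Nat.add_sub_cancel]
      have e1 : x - ((j : ℤ) + 1) = x - 1 - j := by push_cast; ring
      have e2 : a - ((j : ℤ) + 1) = a - 1 - j := by push_cast; ring
      have e3 : ((j + 1 : ℕ) : ℤ) = (j : ℤ) + 1 := by push_cast; ring
      have e4 : (j + 1).choose 2 = j + j.choose 2 := by
        rw [Nat.choose_succ_succ, Nat.choose_one_right]
      have e5 : (q : K) ^ (s + 1 - (j + 1)) * q ^ ((j + 1).choose 2) =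
          q ^ s * q ^ (j.choose 2) := by
        rw [e4, ← pow_add, ← pow_add]
        congr 1
        omega
      rw [e3, e1, e2]
      calc qBinomZ q (x - 1 - j) (a - 1 - j) * (q ^ (s + 1 - (j + 1)) * qBinom q s j) *
            (-1 : K) ^ (j + 1) * q ^ ((j + 1).choose 2)
          = -(qBinomZ q (x - 1 - j) (a - 1 - j) * qBinom q s j * (-1 : K) ^ j *
              (q ^ (s + 1 - (j + 1)) * q ^ ((j + 1).choose 2))) := by ring
        _ = -(q ^ s * (qBinomZ q (x - 1 - j) (a - 1 - j) * qBinom q s j * (-1 : K) ^ j *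
              q ^ (j.choose 2))) := by rw [e5]; ring
    rw [hA, hB]
    have hpas := pascalZ q hq0 hq1 (x - (s + 1)) a
    rw [show x - ((s : ℤ) + 1) + 1 = x - s from by ring,
      show x - ((s : ℤ) + 1) = x - 1 - s from by ring] at hpas
    rw [show x - ((s + 1 : ℕ) : ℤ) = x - (s : ℤ) - 1 from by push_cast; ring]
    rw [hpas]
    have f1 : (q : K) ^ (a * s) * q ^ a = q ^ (a * ((s + 1 : ℕ) : ℤ)) := by
      rw [← zpow_add₀ hq0]; congr 1; push_cast; ring
    have f2 : (q : K) ^ s * q ^ ((a - 1) * s) = q ^ (a * s) := by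
      rw [← zpow_natCast q s, ← zpow_add₀ hq0]; congr 1; push_cast; ring
    have hw : x - (s : ℤ) - 1 = x - 1 - s := by ring
    rw [hw]
    linear_combination (qBinomZ q (x - 1 - (s : ℤ)) a) * f1 +
      (-(qBinomZ q (x - 1 - (s : ℤ)) (a - 1))) * f2

end Aux

/-- The `q`-binomial identity
`qbinom(m+n-r-i-1, n-r-1) = q^{(n-r-1)(r-i)} ∑_{j=r}^{i}
  qbinom(m+n-r-j-1, n-j-1) qbinom(i-r, j-r) (-1)^{j-r} q^{C(j-r,2)}`. -/
theorem stmt19 (q : K) (hq0 : q ≠ 0) (hq1 : ∀ j : ℕ, 0 < j → q ^ j ≠ 1)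
    (m n r i : ℕ) (hr : r ≤ i) (hi : i ≤ n) (hn : n ≤ m) :
    qBinomZ q ((m : ℤ) + n - r - i - 1) ((n : ℤ) - r - 1) =
      q ^ (((n : ℤ) - r - 1) * ((r : ℤ) - i)) *
        ∑ j ∈ Finset.Icc r i,
          qBinomZ q ((m : ℤ) + n - r - j - 1) ((n : ℤ) - j - 1) *
            qBinom q (i - r) (j - r) * (-1 : K) ^ (j - r) * q ^ ((j - r).choose 2) := by
  have key := mainIdent q hq0 hq1 (i - r) ((m : ℤ) + n - 2 * r - 1) ((n : ℤ) - r - 1)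
  have hsum : (∑ j ∈ Finset.Icc r i,
      qBinomZ q ((m : ℤ) + n - r - j - 1) ((n : ℤ) - j - 1) *
        qBinom q (i - r) (j - r) * (-1 : K) ^ (j - r) * q ^ ((j - r).choose 2)) =
      ∑ j ∈ Finset.range (i - r + 1),
        qBinomZ q ((m : ℤ) + n - 2 * r - 1 - j) ((n : ℤ) - r - 1 - j) *
          qBinom q (i - r) j * (-1 : K) ^ j * q ^ (j.choose 2) := by
    rw [show Finset.Icc r i = Finset.Ico r (i + 1) from by ext x; simp only [Finset.mem_Icc, Finset.mem_Ico]; omega,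
      Finset.sum_Ico_eq_sum_range, show i + 1 - r = i - r + 1 from by omega]
    refine Finset.sum_congr rfl fun j hj => ?_
    rw [Finset.mem_range] at hj
    have h1 : (m : ℤ) + n - r - ((r + j : ℕ) : ℤ) - 1 = (m : ℤ) + n - 2 * r - 1 - j := by
      push_cast; ring
    have h2 : (n : ℤ) - ((r + j : ℕ) : ℤ) - 1 = (n : ℤ) - r - 1 - j := by
      push_cast; ring
    rw [h1, h2, Nat.add_sub_cancel_left]
  rw [hsum, key]
  rw [show (m : ℤ) + n - 2 * r - 1 - ((i - r : ℕ) : ℤ) = (m : ℤ) + n - r - i - 1 from by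
    rw [Nat.cast_sub hr]; ring]
  rw [← mul_assoc, ← zpow_add₀ hq0,
    show ((n : ℤ) - r - 1) * ((r : ℤ) - i) + ((n : ℤ) - r - 1) * ((i - r : ℕ) : ℤ) = 0 from by
      rw [Nat.cast_sub hr]; ring,
    zpow_zero, one_mul]
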